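/- Let f : Q^n → Q^n with f not the identity. If f has at least 2n fixed points, then there exists h isomorphic to f whose interaction graph is the complete digraph K_n. -/

import Mathlib

open Finset

def Depends {n q : ℕ} (f : (Fin n → Fin q) → (Fin n → Fin q)) (j i : Fin n) : Prop :=
  ∃ x y : Fin n → Fin q, (∀ k, k ≠ j → x k = y k) ∧ f x i ≠ f y i

lemma exists_injOn_finset {α : Type*} [DecidableEq α] (s t : Finset α) (h : s.card ≤ t.card) :
    ∃ g : α → α, Set.InjOn g ↑s ∧ ∀ x ∈ s, g x ∈ t := by
  classical
  obtain ⟨u, hu, hcard⟩ := Finset.exists_subset_card_eq h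
  have e : {x // x ∈ s} ≃ {x // x ∈ u} :=
    s.equivFin.trans ((finCongr hcard.symm).trans u.equivFin.symm)
  refine ⟨fun x => if hx : x ∈ s then (e ⟨x, hx⟩ : α) else x, ?_, ?_⟩
  · intro x hx y hy hxy
    simp only [Finset.mem_coe] at hx hy
    simp only [dif_pos hx, dif_pos hy] at hxy
    have := e.injective (Subtype.ext hxy)
    exact congrArg Subtype.val this
  · intro x hx
    simp only [dif_pos hx]
    exact hu (e ⟨x, hx⟩).2

lemma exists_perm_extend {α : Type*} [Fintype α] [DecidableEq α] (s : Finset α)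
    (ρ : α → α) (hinj : Set.InjOn ρ ↑s) :
    ∃ π : Equiv.Perm α, ∀ x ∈ s, π (ρ x) = x := by
  classical
  set t := s.image ρ with ht
  have hcard : t.card = s.card := Finset.card_image_of_injOn hinj
  have hbij : Function.Bijective
      (fun x : {x // x ∈ s} => (⟨ρ x, Finset.mem_image_of_mem ρ x.2⟩ : {x // x ∈ t})) := by
    constructor
    · intro x y hxy
      exact Subtype.ext (hinj x.2 y.2 (congrArg Subtype.val hxy))
    · rintro ⟨y, hy⟩
      obtain ⟨x, hx, rfl⟩ := Finset.mem_image.mp hy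
      exact ⟨⟨x, hx⟩, rfl⟩
  set e : {x // x ∈ s} ≃ {x // x ∈ t} := Equiv.ofBijective _ hbij with he
  have hcc : Fintype.card {x // ¬ x ∈ s} = Fintype.card {x // ¬ x ∈ t} := by
    have h1 : Fintype.card {x // x ∈ s} = Fintype.card {x // x ∈ t} := Fintype.card_congr e
    have h2 := Fintype.card_subtype_compl (fun x => x ∈ s)
    have h3 := Fintype.card_subtype_compl (fun x => x ∈ t)
    omega
  have e' : {x // ¬ x ∈ s} ≃ {x // ¬ x ∈ t} := Fintype.equivOfCardEq hcc
  set σ : Equiv.Perm α :=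
    ((Equiv.sumCompl (· ∈ s)).symm.trans ((e.sumCongr e').trans (Equiv.sumCompl (· ∈ t))))
  have hσ : ∀ x ∈ s, σ x = ρ x := by
    intro x hx
    simp only [σ, Equiv.trans_apply]
    rw [Equiv.sumCompl_symm_apply_of_pos hx, Equiv.sumCongr_apply, Sum.map_inl,
      Equiv.sumCompl_apply_inl, he, Equiv.ofBijective_apply]
  refine ⟨σ.symm, fun x hx => ?_⟩
  rw [← hσ x hx, Equiv.symm_apply_apply]

lemma fin_exists_ne {n : ℕ} (hn : 2 ≤ n) (j : Fin n) : ∃ k, k ≠ j := by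
  obtain ⟨k, -, hk⟩ := Finset.exists_mem_ne
    (s := (univ : Finset (Fin n))) (by simp [Finset.card_univ]; omega) j
  exact ⟨k, hk⟩

lemma fin_exists_ne2 {n : ℕ} (hn : 3 ≤ n) (j j' : Fin n) : ∃ k, k ≠ j ∧ k ≠ j' := by
  have h1 : 1 ≤ (((univ : Finset (Fin n)).erase j).erase j').card := by
    have h2 := Finset.pred_card_le_card_erase (s := (univ : Finset (Fin n)).erase j) (a := j')
    have h3 := Finset.pred_card_le_card_erase (s := (univ : Finset (Fin n))) (a := j)
    have h4 : (univ : Finset (Fin n)).card = n := by simp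
    omega
  obtain ⟨k, hk⟩ := Finset.card_pos.mp
    (show 0 < (((univ : Finset (Fin n)).erase j).erase j').card by omega)
  rw [Finset.mem_erase, Finset.mem_erase] at hk
  exact ⟨k, hk.2.1, hk.1⟩

lemma caseC1 {n q : ℕ} (hn : 2 ≤ n) (hq : 3 ≤ q)
    (f : (Fin n → Fin q) → (Fin n → Fin q)) (F : Finset (Fin n → Fin q))
    (hF : ∀ x, x ∈ F ↔ f x = x) (a : Fin n → Fin q) (ha : f a ≠ a)
    (hcard : n ≤ (F.erase (f a)).card) :
    ∃ π : Equiv.Perm (Fin n → Fin q),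
      ∀ i j : Fin n, Depends (fun y => π (f (π.symm y))) j i := by
  classical
  have : NeZero q := ⟨by omega⟩
  have hn0 : 0 < n := by omega
  set b := f a with hb
  set v1 : Fin q := ⟨1, by omega⟩ with hv1
  set vL : Fin q := ⟨q - 1, by omega⟩ with hvL
  have hv10 : v1 ≠ 0 := Fin.ne_of_val_ne (by simp [hv1])
  have hvL0 : vL ≠ 0 := Fin.ne_of_val_ne (by simp [hvL]; omega)
  have hvL1 : vL ≠ v1 := Fin.ne_of_val_ne (by simp [hvL, hv1]; omega)
  set O : Fin n → Fin q := fun _ => 0 with hO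
  set Bp : Fin n → Fin q := fun _ => vL with hBp
  set E : Fin n → (Fin n → Fin q) := fun j i => if i = j then v1 else 0 with hE
  set s' : Finset (Fin n → Fin q) := univ.image E with hs'
  have hOs' : O ∉ s' := by
    simp only [hs', mem_image]
    rintro ⟨j, -, hj⟩
    have := congrFun hj j
    simp [hE, hO] at this
    exact hv10 this
  have hBs' : Bp ∉ s' := by
    simp only [hs', mem_image]
    rintro ⟨j, -, hj⟩
    have := congrFun hj j
    simp [hE, hBp] at this
    exact hvL1 this.symm
  have hOB : O ≠ Bp := fun h => hvL0 (congrFun h ⟨0, hn0⟩).symm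
  obtain ⟨g, hginj, hgmem⟩ := exists_injOn_finset s' (F.erase b)
    (le_trans (le_trans Finset.card_image_le (by simp)) hcard)
  set ρ : (Fin n → Fin q) → (Fin n → Fin q) :=
    fun P => if P = O then a else if P = Bp then b else g P with hρ
  set s : Finset (Fin n → Fin q) := insert O (insert Bp s') with hs
  have hρO : ρ O = a := by simp [hρ]
  have hρB : ρ Bp = b := by simp [hρ, hOB.symm, if_neg]
  have hρ' : ∀ x ∈ s', ρ x = g x := by
    intro x hx
    have h1 : x ≠ O := fun h => hOs' (h ▸ hx)
    have h2 : x ≠ Bp := fun h => hBs' (h ▸ hx)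
    simp [hρ, h1, h2]
  have hgF : ∀ x ∈ s', f (g x) = g x := by
    intro x hx
    exact (hF _).mp (Finset.mem_of_mem_erase (hgmem x hx))
  have hgb : ∀ x ∈ s', g x ≠ b := fun x hx => Finset.ne_of_mem_erase (hgmem x hx)
  have hga : ∀ x ∈ s', g x ≠ a := by
    intro x hx h
    exact ha (by rw [hb, ← h]; exact hgF x hx)
  have hab : a ≠ b := fun h => ha h.symm
  have hinj : Set.InjOn ρ ↑s := by
    intro x hx y hy hxy
    simp only [hs, Finset.coe_insert, Set.mem_insert_iff, Finset.mem_coe] at hx hy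
    rcases hx with rfl | rfl | hx <;> rcases hy with rfl | rfl | hy
    · rfl
    · rw [hρO, hρB] at hxy; exact absurd hxy hab
    · rw [hρO, hρ' y hy] at hxy; exact absurd hxy.symm (hga y hy)
    · rw [hρO, hρB] at hxy; exact absurd hxy.symm hab
    · rfl
    · rw [hρB, hρ' y hy] at hxy; exact absurd hxy.symm (hgb y hy)
    · rw [hρO, hρ' x hx] at hxy; exact absurd hxy (hga x hx)
    · rw [hρB, hρ' x hx] at hxy; exact absurd hxy (hgb x hx)
    · rw [hρ' x hx, hρ' y hy] at hxy; exact hginj hx hy hxy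
  obtain ⟨π, hπ⟩ := exists_perm_extend s ρ hinj
  have hsymm : ∀ x ∈ s, π.symm x = ρ x := by
    intro x hx
    rw [Equiv.symm_apply_eq]
    exact (hπ x hx).symm
  have hOmem : O ∈ s := Finset.mem_insert_self _ _
  have hBmem : Bp ∈ s := Finset.mem_insert_of_mem (Finset.mem_insert_self _ _)
  have hEmem : ∀ j, E j ∈ s' := fun j => Finset.mem_image.mpr ⟨j, Finset.mem_univ _, rfl⟩
  have hmem' : ∀ x ∈ s', x ∈ s := fun x hx =>
    Finset.mem_insert_of_mem (Finset.mem_insert_of_mem hx)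
  have hhO : π (f (π.symm O)) = Bp := by
    rw [hsymm O hOmem, hρO, ← hb, ← hρB]
    exact hπ Bp hBmem
  have hhE : ∀ j, π (f (π.symm (E j))) = E j := by
    intro j
    rw [hsymm (E j) (hmem' _ (hEmem j)), hρ' _ (hEmem j), hgF _ (hEmem j), ← hρ' _ (hEmem j)]
    exact hπ _ (hmem' _ (hEmem j))
  refine ⟨π, fun i j => ⟨O, E j, ?_, ?_⟩⟩
  · intro k hk
    simp [hO, hE, hk]
  · show π (f (π.symm O)) i ≠ π (f (π.symm (E j))) i
    rw [hhO, hhE j]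
    intro h
    simp only [hBp, hE] at h
    by_cases hij : i = j
    · rw [if_pos hij] at h; exact hvL1 h
    · rw [if_neg hij] at h; exact hvL0 h

lemma caseC2 {n : ℕ} (hn : 3 ≤ n)
    (f : (Fin n → Fin 2) → (Fin n → Fin 2)) (F : Finset (Fin n → Fin 2))
    (hF : ∀ x, x ∈ F ↔ f x = x) (a : Fin n → Fin 2) (ha : f a ≠ a)
    (hcard : 2 * n ≤ (F.erase (f a)).card) :
    ∃ π : Equiv.Perm (Fin n → Fin 2),
      ∀ i j : Fin n, Depends (fun y => π (f (π.symm y))) j i := by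
  classical
  have hn2 : 2 ≤ n := by omega
  have hn0 : 0 < n := by omega
  have : NeZero n := ⟨by omega⟩
  have h10 : (1 : Fin n) ≠ 0 := by
    apply Fin.ne_of_val_ne
    simp [Fin.val_one']
    omega
  have hj1 : ∀ j : Fin n, j + 1 ≠ j := by
    intro j h
    apply h10
    have h' : j + 1 = j + 0 := by rw [add_zero]; exact h
    exact add_left_cancel h'
  set b := f a with hb
  set O : Fin n → Fin 2 := fun _ => 0 with hO
  set Ap : Fin n → Fin 2 := fun _ => 1 with hAp
  set E : Fin n → (Fin n → Fin 2) := fun j i => if i = j then 1 else 0 with hE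
  set D : Fin n → (Fin n → Fin 2) := fun j i => if i = j ∨ i = j + 1 then 1 else 0 with hD
  set s' : Finset (Fin n → Fin 2) := univ.image E ∪ univ.image D with hs'
  have hOs' : O ∉ s' := by
    simp only [hs', Finset.mem_union, mem_image]
    rintro (⟨j, -, hj⟩ | ⟨j, -, hj⟩)
    · have := congrFun hj j; simp [hE, hO] at this
    · have := congrFun hj j; simp [hD, hO] at this
  have hAs' : Ap ∉ s' := by
    simp only [hs', Finset.mem_union, mem_image]
    rintro (⟨j, -, hj⟩ | ⟨j, -, hj⟩)
    · obtain ⟨k, hk⟩ := fin_exists_ne hn2 j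
      have := congrFun hj k; simp [hE, hAp, hk] at this
    · obtain ⟨k, hk1, hk2⟩ := fin_exists_ne2 hn j (j + 1)
      have := congrFun hj k; simp [hD, hAp, hk1, hk2] at this
  have hOA : O ≠ Ap := by
    intro h
    have := congrFun h ⟨0, hn0⟩
    simp [hO, hAp] at this
  have hs'card : s'.card ≤ 2 * n := by
    have h1 := Finset.card_union_le (univ.image E) (univ.image D)
    have h2 := Finset.card_image_le (s := (univ : Finset (Fin n))) (f := E)
    have h3 := Finset.card_image_le (s := (univ : Finset (Fin n))) (f := D)
    simp only [Finset.card_univ, Fintype.card_fin] at h2 h3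
    rw [hs']
    omega
  obtain ⟨g, hginj, hgmem⟩ := exists_injOn_finset s' (F.erase b) (le_trans hs'card hcard)
  set ρ : (Fin n → Fin 2) → (Fin n → Fin 2) :=
    fun P => if P = O then a else if P = Ap then b else g P with hρ
  set s : Finset (Fin n → Fin 2) := insert O (insert Ap s') with hs
  have hρO : ρ O = a := by simp [hρ]
  have hρA : ρ Ap = b := by simp [hρ, hOA.symm, if_neg]
  have hρ' : ∀ x ∈ s', ρ x = g x := by
    intro x hx
    have h1 : x ≠ O := fun h => hOs' (h ▸ hx)
    have h2 : x ≠ Ap := fun h => hAs' (h ▸ hx)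
    simp [hρ, h1, h2]
  have hgF : ∀ x ∈ s', f (g x) = g x := fun x hx =>
    (hF _).mp (Finset.mem_of_mem_erase (hgmem x hx))
  have hgb : ∀ x ∈ s', g x ≠ b := fun x hx => Finset.ne_of_mem_erase (hgmem x hx)
  have hga : ∀ x ∈ s', g x ≠ a := by
    intro x hx h
    exact ha (by rw [hb, ← h]; exact hgF x hx)
  have hab : a ≠ b := fun h => ha h.symm
  have hinj : Set.InjOn ρ ↑s := by
    intro x hx y hy hxy
    simp only [hs, Finset.coe_insert, Set.mem_insert_iff, Finset.mem_coe] at hx hy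
    rcases hx with rfl | rfl | hx <;> rcases hy with rfl | rfl | hy
    · rfl
    · rw [hρO, hρA] at hxy; exact absurd hxy hab
    · rw [hρO, hρ' y hy] at hxy; exact absurd hxy.symm (hga y hy)
    · rw [hρO, hρA] at hxy; exact absurd hxy.symm hab
    · rfl
    · rw [hρA, hρ' y hy] at hxy; exact absurd hxy.symm (hgb y hy)
    · rw [hρO, hρ' x hx] at hxy; exact absurd hxy (hga x hx)
    · rw [hρA, hρ' x hx] at hxy; exact absurd hxy (hgb x hx)
    · rw [hρ' x hx, hρ' y hy] at hxy; exact hginj hx hy hxy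
  obtain ⟨π, hπ⟩ := exists_perm_extend s ρ hinj
  have hsymm : ∀ x ∈ s, π.symm x = ρ x := by
    intro x hx
    rw [Equiv.symm_apply_eq]
    exact (hπ x hx).symm
  have hOmem : O ∈ s := Finset.mem_insert_self _ _
  have hAmem : Ap ∈ s := Finset.mem_insert_of_mem (Finset.mem_insert_self _ _)
  have hmem' : ∀ x ∈ s', x ∈ s := fun x hx =>
    Finset.mem_insert_of_mem (Finset.mem_insert_of_mem hx)
  have hEmem : ∀ j, E j ∈ s' := fun j =>
    Finset.mem_union_left _ (Finset.mem_image.mpr ⟨j, Finset.mem_univ _, rfl⟩)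
  have hDmem : ∀ j, D j ∈ s' := fun j =>
    Finset.mem_union_right _ (Finset.mem_image.mpr ⟨j, Finset.mem_univ _, rfl⟩)
  have hhO : π (f (π.symm O)) = Ap := by
    rw [hsymm O hOmem, hρO, ← hb, ← hρA]
    exact hπ Ap hAmem
  have hfix : ∀ x ∈ s', π (f (π.symm x)) = x := by
    intro x hx
    rw [hsymm x (hmem' x hx), hρ' x hx, hgF x hx, ← hρ' x hx]
    exact hπ x (hmem' x hx)
  refine ⟨π, fun i j => ?_⟩
  by_cases hij : i = j
  · subst hij
    refine ⟨E (i + 1), D i, ?_, ?_⟩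
    · intro k hk
      by_cases hk1 : k = i + 1 <;> simp [hE, hD, hk, hk1]
    · show π (f (π.symm (E (i + 1)))) i ≠ π (f (π.symm (D i))) i
      rw [hfix _ (hEmem (i + 1)), hfix _ (hDmem i)]
      simp [hE, hD, (hj1 i).symm]
  · refine ⟨O, E j, ?_, ?_⟩
    · intro k hk
      simp [hO, hE, hk]
    · show π (f (π.symm O)) i ≠ π (f (π.symm (E j))) i
      rw [hhO, hfix _ (hEmem j)]
      simp [hAp, hE, hij]

lemma caseC3 {n : ℕ} (hn : 3 ≤ n)
    (f : (Fin n → Fin 2) → (Fin n → Fin 2)) (F : Finset (Fin n → Fin 2))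
    (hF : ∀ x, x ∈ F ↔ f x = x) (a a' : Fin n → Fin 2)
    (ha : f a ≠ a) (ha' : f a' ≠ a') (haa : a ≠ a')
    (hba : f a' = f a) (hbF : f (f a) = f a)
    (hcard : 2 * n - 1 ≤ (F.erase (f a)).card) :
    ∃ π : Equiv.Perm (Fin n → Fin 2),
      ∀ i j : Fin n, Depends (fun y => π (f (π.symm y))) j i := by
  classical
  have hn2 : 2 ≤ n := by omega
  have hn0 : 0 < n := by omega
  have : NeZero n := ⟨by omega⟩
  set b := f a with hb
  set O : Fin n → Fin 2 := fun _ => 0 with hO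
  set Ap : Fin n → Fin 2 := fun _ => 1 with hAp
  set E : Fin n → (Fin n → Fin 2) := fun j i => if i = j then 1 else 0 with hE
  set G : Fin n → (Fin n → Fin 2) := fun j i => if i = j then 0 else 1 with hG
  set s' : Finset (Fin n → Fin 2) := univ.image E ∪ univ.image G with hs'
  have hOs' : O ∉ s' := by
    simp only [hs', Finset.mem_union, mem_image]
    rintro (⟨j, -, hj⟩ | ⟨j, -, hj⟩)
    · have := congrFun hj j; simp [hE, hO] at this
    · obtain ⟨k, hk⟩ := fin_exists_ne hn2 j
      have := congrFun hj k; simp [hG, hO, hk] at this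
  have hAs' : Ap ∉ s' := by
    simp only [hs', Finset.mem_union, mem_image]
    rintro (⟨j, -, hj⟩ | ⟨j, -, hj⟩)
    · obtain ⟨k, hk⟩ := fin_exists_ne hn2 j
      have := congrFun hj k; simp [hE, hAp, hk] at this
    · have := congrFun hj j; simp [hG, hAp] at this
  have hOA : O ≠ Ap := by
    intro h
    have := congrFun h ⟨0, hn0⟩
    simp [hO, hAp] at this
  have hE0s' : E 0 ∈ s' :=
    Finset.mem_union_left _ (Finset.mem_image.mpr ⟨0, Finset.mem_univ _, rfl⟩)
  set s'' : Finset (Fin n → Fin 2) := s'.erase (E 0) with hs''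
  have hs''card : s''.card ≤ 2 * n - 1 := by
    have h1 := Finset.card_union_le (univ.image E) (univ.image G)
    have h2 := Finset.card_image_le (s := (univ : Finset (Fin n))) (f := E)
    have h3 := Finset.card_image_le (s := (univ : Finset (Fin n))) (f := G)
    simp only [Finset.card_univ, Fintype.card_fin] at h2 h3
    have h4 := Finset.card_erase_of_mem hE0s'
    have h5 : s'.card = (univ.image E ∪ univ.image G).card := by rw [hs']
    rw [hs'']
    omega
  obtain ⟨g, hginj, hgmem⟩ := exists_injOn_finset s'' (F.erase b) (le_trans hs''card hcard)
  set ρ : (Fin n → Fin 2) → (Fin n → Fin 2) :=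
    fun P => if P = O then a else if P = Ap then a' else if P = E 0 then b else g P with hρ
  set s : Finset (Fin n → Fin 2) := insert O (insert Ap s') with hs
  have hE0O : E 0 ≠ O := fun h => hOs' (h ▸ hE0s')
  have hE0A : E 0 ≠ Ap := fun h => hAs' (h ▸ hE0s')
  have hρO : ρ O = a := by simp [hρ]
  have hρA : ρ Ap = a' := by simp [hρ, hOA.symm, if_neg]
  have hρE0 : ρ (E 0) = b := by simp [hρ, hE0O, hE0A]
  have hρ'' : ∀ x ∈ s'', ρ x = g x := by
    intro x hx
    have hxs' : x ∈ s' := Finset.mem_of_mem_erase hx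
    have h1 : x ≠ O := fun h => hOs' (h ▸ hxs')
    have h2 : x ≠ Ap := fun h => hAs' (h ▸ hxs')
    have h3 : x ≠ E 0 := Finset.ne_of_mem_erase hx
    simp [hρ, h1, h2, h3]
  have hgF : ∀ x ∈ s'', f (g x) = g x := fun x hx =>
    (hF _).mp (Finset.mem_of_mem_erase (hgmem x hx))
  have hgb : ∀ x ∈ s'', g x ≠ b := fun x hx => Finset.ne_of_mem_erase (hgmem x hx)
  have hga : ∀ x ∈ s'', g x ≠ a := by
    intro x hx h
    exact ha (by rw [hb, ← h]; exact hgF x hx)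
  have hga' : ∀ x ∈ s'', g x ≠ a' := by
    intro x hx h
    exact ha' (by rw [← h]; exact hgF x hx)
  have hab : a ≠ b := fun h => ha h.symm
  have ha'b : a' ≠ b := fun h => ha' (hba.trans h.symm)
  have hclass : ∀ x ∈ s, x = O ∨ x = Ap ∨ x = E 0 ∨ x ∈ s'' := by
    intro x hx
    rcases Finset.mem_insert.mp hx with rfl | hx
    · exact Or.inl rfl
    rcases Finset.mem_insert.mp hx with rfl | hx
    · exact Or.inr (Or.inl rfl)
    by_cases hx0 : x = E 0
    · exact Or.inr (Or.inr (Or.inl hx0))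
    · exact Or.inr (Or.inr (Or.inr (Finset.mem_erase.mpr ⟨hx0, hx⟩)))
  have hinj : Set.InjOn ρ ↑s := by
    intro x hx y hy hxy
    simp only [Finset.mem_coe] at hx hy
    rcases hclass x hx with rfl | rfl | rfl | hx' <;> rcases hclass y hy with rfl | rfl | rfl | hy'
    · rfl
    · rw [hρO, hρA] at hxy; exact absurd hxy haa
    · rw [hρO, hρE0] at hxy; exact absurd hxy hab
    · rw [hρO, hρ'' y hy'] at hxy; exact absurd hxy.symm (hga y hy')
    · rw [hρO, hρA] at hxy; exact absurd hxy.symm haa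
    · rfl
    · rw [hρA, hρE0] at hxy; exact absurd hxy ha'b
    · rw [hρA, hρ'' y hy'] at hxy; exact absurd hxy.symm (hga' y hy')
    · rw [hρO, hρE0] at hxy; exact absurd hxy.symm hab
    · rw [hρA, hρE0] at hxy; exact absurd hxy.symm ha'b
    · rfl
    · rw [hρE0, hρ'' y hy'] at hxy; exact absurd hxy.symm (hgb y hy')
    · rw [hρO, hρ'' x hx'] at hxy; exact absurd hxy (hga x hx')
    · rw [hρA, hρ'' x hx'] at hxy; exact absurd hxy (hga' x hx')
    · rw [hρE0, hρ'' x hx'] at hxy; exact absurd hxy (hgb x hx')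
    · rw [hρ'' x hx', hρ'' y hy'] at hxy; exact hginj hx' hy' hxy
  obtain ⟨π, hπ⟩ := exists_perm_extend s ρ hinj
  have hsymm : ∀ x ∈ s, π.symm x = ρ x := by
    intro x hx
    rw [Equiv.symm_apply_eq]
    exact (hπ x hx).symm
  have hOmem : O ∈ s := Finset.mem_insert_self _ _
  have hAmem : Ap ∈ s := Finset.mem_insert_of_mem (Finset.mem_insert_self _ _)
  have hmem' : ∀ x ∈ s', x ∈ s := fun x hx =>
    Finset.mem_insert_of_mem (Finset.mem_insert_of_mem hx)
  have hEmem : ∀ j, E j ∈ s' := fun j =>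
    Finset.mem_union_left _ (Finset.mem_image.mpr ⟨j, Finset.mem_univ _, rfl⟩)
  have hGmem : ∀ j, G j ∈ s' := fun j =>
    Finset.mem_union_right _ (Finset.mem_image.mpr ⟨j, Finset.mem_univ _, rfl⟩)
  have hρF : ∀ x ∈ s', f (ρ x) = ρ x := by
    intro x hx
    by_cases hx0 : x = E 0
    · subst hx0; rw [hρE0]; exact hbF
    · have hx'' : x ∈ s'' := Finset.mem_erase.mpr ⟨hx0, hx⟩
      rw [hρ'' x hx'']; exact hgF x hx''
  have hfix : ∀ x ∈ s', π (f (π.symm x)) = x := by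
    intro x hx
    rw [hsymm x (hmem' x hx), hρF x hx]
    exact hπ x (hmem' x hx)
  have hhO : π (f (π.symm O)) = E 0 := by
    rw [hsymm O hOmem, hρO, ← hb, ← hρE0]
    exact hπ _ (hmem' _ hE0s')
  have hhA : π (f (π.symm Ap)) = E 0 := by
    rw [hsymm Ap hAmem, hρA, hba, ← hρE0]
    exact hπ _ (hmem' _ hE0s')
  refine ⟨π, fun i j => ?_⟩
  by_cases hv : E 0 i = E j i
  · refine ⟨Ap, G j, ?_, ?_⟩
    · intro k hk
      simp [hAp, hG, hk]
    · show π (f (π.symm Ap)) i ≠ π (f (π.symm (G j))) i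
      rw [hhA, hfix _ (hGmem j), hv]
      simp only [hE, hG]
      by_cases hij : i = j <;> simp [hij]
  · refine ⟨O, E j, ?_, ?_⟩
    · intro k hk
      simp [hO, hE, hk]
    · show π (f (π.symm O)) i ≠ π (f (π.symm (E j))) i
      rw [hhO, hfix _ (hEmem j)]
      exact hv

lemma caseC4 {n : ℕ} (hn : 3 ≤ n)
    (f : (Fin n → Fin 2) → (Fin n → Fin 2)) (F : Finset (Fin n → Fin 2))
    (hF : ∀ x, x ∈ F ↔ f x = x) (a a' : Fin n → Fin 2)
    (ha : f a ≠ a) (ha' : f a' ≠ a') (haa : a ≠ a')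
    (hbF : f (f a) = f a) (hb'F : f (f a') = f a') (hbb' : f a ≠ f a')
    (hcard : 2 * n - 2 ≤ ((F.erase (f a)).erase (f a')).card) :
    ∃ π : Equiv.Perm (Fin n → Fin 2),
      ∀ i j : Fin n, Depends (fun y => π (f (π.symm y))) j i := by
  classical
  have hn2 : 2 ≤ n := by omega
  have hn0 : 0 < n := by omega
  have : NeZero n := ⟨by omega⟩
  have h10 : (1 : Fin n) ≠ 0 := by
    apply Fin.ne_of_val_ne
    simp [Fin.val_one']
    omega
  set b := f a with hb
  set b' := f a' with hb'
  set O : Fin n → Fin 2 := fun _ => 0 with hO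
  set E : Fin n → (Fin n → Fin 2) := fun j i => if i = j then 1 else 0 with hE
  set Q : Fin n → (Fin n → Fin 2) := fun j i => if i = 0 ∨ i = j then 1 else 0 with hQ
  set Bv : Fin n → Fin 2 := fun i => if i = 1 then 0 else 1 with hBv
  set s' : Finset (Fin n → Fin 2) := univ.image E ∪ univ.image Q with hs'
  have hOs' : O ∉ s' := by
    simp only [hs', Finset.mem_union, mem_image]
    rintro (⟨j, -, hj⟩ | ⟨j, -, hj⟩)
    · have := congrFun hj j; simp [hE, hO] at this
    · have := congrFun hj 0; simp [hQ, hO] at this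
  have hBvO : Bv ≠ O := by
    intro h
    have := congrFun h 0
    simp [hBv, hO, h10.symm] at this
  have hBvE0 : Bv ≠ E 0 := by
    obtain ⟨k, hk1, hk0⟩ := fin_exists_ne2 hn 1 0
    intro h
    have := congrFun h k
    simp [hBv, hE, hk1, hk0] at this
  have hBvE1 : Bv ≠ E 1 := by
    intro h
    have := congrFun h 1
    simp [hBv, hE] at this
  have hE1E0 : E 1 ≠ E 0 := by
    intro h
    have := congrFun h 1
    simp [hE, h10] at this
  have hE0O : E 0 ≠ O := by
    intro h
    have := congrFun h 0
    simp [hE, hO] at this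
  have hE1O : E 1 ≠ O := by
    intro h
    have := congrFun h 1
    simp [hE, hO] at this
  have hE0s' : E 0 ∈ s' :=
    Finset.mem_union_left _ (Finset.mem_image.mpr ⟨0, Finset.mem_univ _, rfl⟩)
  have hE1s' : E 1 ∈ s' :=
    Finset.mem_union_left _ (Finset.mem_image.mpr ⟨1, Finset.mem_univ _, rfl⟩)
  set s'' : Finset (Fin n → Fin 2) := ((s'.erase (E 0)).erase (E 1)).erase Bv with hs''
  have hs''card : s''.card ≤ 2 * n - 2 := by
    have h1 := Finset.card_union_le (univ.image E) (univ.image Q)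
    have h2 := Finset.card_image_le (s := (univ : Finset (Fin n))) (f := E)
    have h3 := Finset.card_image_le (s := (univ : Finset (Fin n))) (f := Q)
    simp only [Finset.card_univ, Fintype.card_fin] at h2 h3
    have h5 : s'.card = (univ.image E ∪ univ.image Q).card := by rw [hs']
    have h4 := Finset.card_erase_of_mem hE0s'
    have h6 : E 1 ∈ s'.erase (E 0) := Finset.mem_erase.mpr ⟨hE1E0, hE1s'⟩
    have h7 := Finset.card_erase_of_mem h6
    have h8 := Finset.card_erase_le (s := (s'.erase (E 0)).erase (E 1)) (a := Bv)
    rw [hs'']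
    omega
  obtain ⟨g, hginj, hgmem⟩ := exists_injOn_finset s'' ((F.erase b).erase b')
    (le_trans hs''card hcard)
  set ρ : (Fin n → Fin 2) → (Fin n → Fin 2) :=
    fun P => if P = O then a else if P = E 0 then a' else if P = Bv then b
      else if P = E 1 then b' else g P with hρ
  set s : Finset (Fin n → Fin 2) := insert O (insert Bv s') with hs
  have hρO : ρ O = a := by simp [hρ]
  have hρE0 : ρ (E 0) = a' := by simp [hρ, hE0O]
  have hρBv : ρ Bv = b := by simp [hρ, hBvO, hBvE0]
  have hρE1 : ρ (E 1) = b' := by simp [hρ, hE1O, hE1E0, hBvE1.symm]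
  have hρ'' : ∀ x ∈ s'', ρ x = g x := by
    intro x hx
    have hxs' : x ∈ s' := Finset.mem_of_mem_erase (Finset.mem_of_mem_erase (Finset.mem_of_mem_erase hx))
    have h1 : x ≠ O := fun h => hOs' (h ▸ hxs')
    have h2 : x ≠ Bv := Finset.ne_of_mem_erase hx
    have h3 : x ≠ E 1 := Finset.ne_of_mem_erase (Finset.mem_of_mem_erase hx)
    have h4 : x ≠ E 0 := Finset.ne_of_mem_erase (Finset.mem_of_mem_erase (Finset.mem_of_mem_erase hx))
    simp [hρ, h1, h2, h3, h4]
  have hgF : ∀ x ∈ s'', f (g x) = g x := fun x hx =>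
    (hF _).mp (Finset.mem_of_mem_erase (Finset.mem_of_mem_erase (hgmem x hx)))
  have hgb' : ∀ x ∈ s'', g x ≠ b' := fun x hx => Finset.ne_of_mem_erase (hgmem x hx)
  have hgb : ∀ x ∈ s'', g x ≠ b := fun x hx =>
    Finset.ne_of_mem_erase (Finset.mem_of_mem_erase (hgmem x hx))
  have hga : ∀ x ∈ s'', g x ≠ a := by
    intro x hx h
    exact ha (by rw [hb, ← h]; exact hgF x hx)
  have hga' : ∀ x ∈ s'', g x ≠ a' := by
    intro x hx h
    exact ha' (by rw [hb', ← h]; exact hgF x hx)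
  have hab : a ≠ b := fun h => ha h.symm
  have ha'b' : a' ≠ b' := fun h => ha' h.symm
  have hab' : a ≠ b' := by
    intro h
    exact ha (by rw [hb, h]; exact hb'F)
  have ha'b : a' ≠ b := by
    intro h
    exact ha' (by rw [hb', h]; exact hbF)
  have hclass : ∀ x ∈ s, x = O ∨ x = Bv ∨ x = E 0 ∨ x = E 1 ∨ x ∈ s'' := by
    intro x hx
    rcases Finset.mem_insert.mp hx with rfl | hx
    · exact Or.inl rfl
    rcases Finset.mem_insert.mp hx with rfl | hx
    · exact Or.inr (Or.inl rfl)
    by_cases hx0 : x = E 0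
    · exact Or.inr (Or.inr (Or.inl hx0))
    by_cases hx1 : x = E 1
    · exact Or.inr (Or.inr (Or.inr (Or.inl hx1)))
    by_cases hxB : x = Bv
    · exact Or.inr (Or.inl hxB)
    · exact Or.inr (Or.inr (Or.inr (Or.inr
        (Finset.mem_erase.mpr ⟨hxB, Finset.mem_erase.mpr ⟨hx1, Finset.mem_erase.mpr ⟨hx0, hx⟩⟩⟩))))
  have hinj : Set.InjOn ρ ↑s := by
    intro x hx y hy hxy
    simp only [Finset.mem_coe] at hx hy
    rcases hclass x hx with rfl | rfl | rfl | rfl | hx' <;>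
      rcases hclass y hy with rfl | rfl | rfl | rfl | hy'
    · rfl
    · rw [hρO, hρBv] at hxy; exact absurd hxy hab
    · rw [hρO, hρE0] at hxy; exact absurd hxy haa
    · rw [hρO, hρE1] at hxy; exact absurd hxy hab'
    · rw [hρO, hρ'' y hy'] at hxy; exact absurd hxy.symm (hga y hy')
    · rw [hρO, hρBv] at hxy; exact absurd hxy.symm hab
    · rfl
    · rw [hρBv, hρE0] at hxy; exact absurd hxy.symm ha'b
    · rw [hρBv, hρE1] at hxy; exact absurd hxy hbb'
    · rw [hρBv, hρ'' y hy'] at hxy; exact absurd hxy.symm (hgb y hy')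
    · rw [hρO, hρE0] at hxy; exact absurd hxy.symm haa
    · rw [hρBv, hρE0] at hxy; exact absurd hxy ha'b
    · rfl
    · rw [hρE0, hρE1] at hxy; exact absurd hxy ha'b'
    · rw [hρE0, hρ'' y hy'] at hxy; exact absurd hxy.symm (hga' y hy')
    · rw [hρO, hρE1] at hxy; exact absurd hxy.symm hab'
    · rw [hρBv, hρE1] at hxy; exact absurd hxy.symm hbb'
    · rw [hρE0, hρE1] at hxy; exact absurd hxy.symm ha'b'
    · rfl
    · rw [hρE1, hρ'' y hy'] at hxy; exact absurd hxy.symm (hgb' y hy')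
    · rw [hρO, hρ'' x hx'] at hxy; exact absurd hxy (hga x hx')
    · rw [hρBv, hρ'' x hx'] at hxy; exact absurd hxy (hgb x hx')
    · rw [hρE0, hρ'' x hx'] at hxy; exact absurd hxy (hga' x hx')
    · rw [hρE1, hρ'' x hx'] at hxy; exact absurd hxy (hgb' x hx')
    · rw [hρ'' x hx', hρ'' y hy'] at hxy; exact hginj hx' hy' hxy
  obtain ⟨π, hπ⟩ := exists_perm_extend s ρ hinj
  have hsymm : ∀ x ∈ s, π.symm x = ρ x := by
    intro x hx
    rw [Equiv.symm_apply_eq]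
    exact (hπ x hx).symm
  have hOmem : O ∈ s := Finset.mem_insert_self _ _
  have hBvmem : Bv ∈ s := Finset.mem_insert_of_mem (Finset.mem_insert_self _ _)
  have hmem' : ∀ x ∈ s', x ∈ s := fun x hx =>
    Finset.mem_insert_of_mem (Finset.mem_insert_of_mem hx)
  have hEmem : ∀ j, E j ∈ s' := fun j =>
    Finset.mem_union_left _ (Finset.mem_image.mpr ⟨j, Finset.mem_univ _, rfl⟩)
  have hQmem : ∀ j, Q j ∈ s' := fun j =>
    Finset.mem_union_right _ (Finset.mem_image.mpr ⟨j, Finset.mem_univ _, rfl⟩)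
  have hρF : ∀ x ∈ s', x ≠ E 0 → f (ρ x) = ρ x := by
    intro x hx hx0
    by_cases hxB : x = Bv
    · subst hxB; rw [hρBv]; exact hbF
    by_cases hx1 : x = E 1
    · subst hx1; rw [hρE1]; exact hb'F
    · have hx'' : x ∈ s'' := Finset.mem_erase.mpr ⟨hxB,
        Finset.mem_erase.mpr ⟨hx1, Finset.mem_erase.mpr ⟨hx0, hx⟩⟩⟩
      rw [hρ'' x hx'']; exact hgF x hx''
  have hfix : ∀ x ∈ s', x ≠ E 0 → π (f (π.symm x)) = x := by
    intro x hx hx0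
    rw [hsymm x (hmem' x hx), hρF x hx hx0]
    exact hπ x (hmem' x hx)
  have hfixBv : π (f (π.symm Bv)) = Bv := by
    rw [hsymm Bv hBvmem, hρBv, hbF, ← hρBv]
    exact hπ Bv hBvmem
  have hhO : π (f (π.symm O)) = Bv := by
    rw [hsymm O hOmem, hρO, ← hb, ← hρBv]
    exact hπ Bv hBvmem
  have hhE0 : π (f (π.symm (E 0))) = E 1 := by
    rw [hsymm _ (hmem' _ hE0s'), hρE0, ← hb', ← hρE1]
    exact hπ _ (hmem' _ hE1s')
  refine ⟨π, fun i j => ?_⟩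
  by_cases hj0 : j = 0
  · subst hj0
    refine ⟨O, E 0, ?_, ?_⟩
    · intro k hk
      simp [hO, hE, hk]
    · show π (f (π.symm O)) i ≠ π (f (π.symm (E 0))) i
      rw [hhO, hhE0]
      simp only [hBv, hE]
      by_cases hi1 : i = 1 <;> simp [hi1]
  · by_cases hv : Bv i = E j i
    · -- use pair (E 0, Q j)
      have hQj0 : Q j ≠ E 0 := by
        intro h
        have := congrFun h j
        simp [hQ, hE, hj0] at this
      refine ⟨E 0, Q j, ?_, ?_⟩
      · intro k hk
        by_cases hk0 : k = 0 <;> simp [hE, hQ, hk, hk0]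
      · show π (f (π.symm (E 0))) i ≠ π (f (π.symm (Q j))) i
        rw [hhE0, hfix _ (hQmem j) hQj0]
        by_cases hi1 : i = 1
        · subst hi1
          by_cases hj : (1 : Fin n) = j
          · exfalso
            simp [hBv, hE, ← hj] at hv
          · simp [hE, hQ, h10, hj]
        · by_cases hij : i = j
          · subst hij
            simp [hE, hQ, hi1]
          · exfalso
            simp [hBv, hE, hi1, hij] at hv
    · refine ⟨O, E j, ?_, ?_⟩
      · intro k hk
        simp [hO, hE, hk]
      · show π (f (π.symm O)) i ≠ π (f (π.symm (E j))) i
        have hEj0 : E j ≠ E 0 := by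
          intro h
          have := congrFun h j
          simp [hE, hj0] at this
        rw [hhO, hfix _ (hEmem j) hEj0]
        exact hv

lemma two_mul_add_two_le_two_pow {m : ℕ} (h : 3 ≤ m) : 2 * m + 2 ≤ 2 ^ m := by
  induction m, h using Nat.le_induction with
  | base => norm_num
  | succ k hk ih => rw [pow_succ]; omega

theorem complete_of_many_fixed_points {n q : ℕ} (hn : 2 ≤ n) (hq : 2 ≤ q)
    (f : (Fin n → Fin q) → (Fin n → Fin q)) (hid : f ≠ id)
    (hfix : 2 * n ≤ (univ.filter (fun x : Fin n → Fin q => f x = x)).card) :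
    ∃ π : Equiv.Perm (Fin n → Fin q),
      ∀ i j : Fin n, Depends (fun y => π (f (π.symm y))) j i := by
  classical
  set F := univ.filter (fun x : Fin n → Fin q => f x = x) with hFdef
  have hF : ∀ x, x ∈ F ↔ f x = x := by intro x; simp [hFdef]
  obtain ⟨a, ha⟩ : ∃ a, f a ≠ a := by
    by_contra h
    push_neg at h
    exact hid (funext fun x => h x)
  have herase : ∀ c : Fin n → Fin q, F.card - 1 ≤ (F.erase c).card := fun c =>
    Finset.pred_card_le_card_erase
  by_cases hq3 : 3 ≤ q
  · apply caseC1 hn hq3 f F hF a ha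
    have := herase (f a)
    omega
  · have hq2 : q = 2 := by omega
    subst hq2
    have hn3 : 3 ≤ n := by
      rcases Nat.lt_or_ge n 3 with h3 | h3
      · exfalso
        have hn2 : n = 2 := by omega
        subst hn2
        have h2 : Fintype.card (Fin 2 → Fin 2) = 4 := by
          rw [Fintype.card_fun]
          simp
        have h1 := Finset.card_le_univ F
        rw [h2] at h1
        have hFuniv : F = univ := Finset.eq_univ_of_card F (by omega)
        exact ha ((hF a).mp (hFuniv ▸ Finset.mem_univ a))
      · exact h3
    by_cases hbF : f (f a) = f a
    · by_cases hFbig : 2 * n ≤ (F.erase (f a)).card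
      · exact caseC2 hn3 f F hF a ha hFbig
      · have hbmem : f a ∈ F := (hF (f a)).mpr hbF
        have hcardF : F.card = 2 * n := by
          have h1 := Finset.card_erase_of_mem hbmem
          omega
        have hcompl : 2 ≤ (univ \ F).card := by
          rw [Finset.card_sdiff_of_subset (Finset.subset_univ F)]
          have h2 : (univ : Finset (Fin n → Fin 2)).card = 2 ^ n := by
            rw [Finset.card_univ, Fintype.card_fun]
            simp
          have := two_mul_add_two_le_two_pow hn3
          omega
        have hamem : a ∈ univ \ F :=
          Finset.mem_sdiff.mpr ⟨Finset.mem_univ a, fun h => ha ((hF a).mp h)⟩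
        obtain ⟨a', ha'mem, ha'a⟩ :=
          Finset.exists_mem_ne (s := univ \ F) (by omega) a
        have ha' : f a' ≠ a' := fun h =>
          (Finset.mem_sdiff.mp ha'mem).2 ((hF a').mpr h)
        by_cases hb'F : f (f a') = f a'
        · by_cases hbb : f a' = f a
          · apply caseC3 hn3 f F hF a a' ha ha' ha'a.symm hbb hbF
            have := herase (f a)
            omega
          · apply caseC4 hn3 f F hF a a' ha ha' ha'a.symm hbF hb'F (Ne.symm hbb)
            have h1 := herase (f a)
            have h2 : (F.erase (f a)).card - 1 ≤ ((F.erase (f a)).erase (f a')).card :=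
              Finset.pred_card_le_card_erase
            omega
        · apply caseC2 hn3 f F hF a' ha'
          rw [Finset.erase_eq_of_notMem (fun h => hb'F ((hF _).mp h))]
          exact hfix
    · apply caseC2 hn3 f F hF a ha
      rw [Finset.erase_eq_of_notMem (fun h => hbF ((hF _).mp h))]
      exact hfix
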